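/- For a prime p and k ≤ p, s(p^k) = k·p, where s is the Smarandache function s(n) = min{j ∈ ℕ : n ∣ j!}. -/
import Mathlib

/-- The Smarandache function: the least `k` with `n ∣ k!`. -/
noncomputable def smarandache (n : ℕ) : ℕ := sInf {k : ℕ | n ∣ Nat.factorial k}

/-- For `p` prime and `k ≤ p`, `s(p^k) = k⬝p`. -/
theorem smarandache_prime_pow (p : ℕ) (hp : p.Prime) (k : ℕ) (hk : 0 < k)
    (hkp : k ≤ p) : smarandache (p ^ k) = k * p := by
  have hp1 : 1 < p := hp.one_lt
  have hkp2 : k * p ≤ p ^ 2 := by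
    have := Nat.mul_le_mul_right p hkp
    simpa [pow_two] using this
  have hlog : ∀ n : ℕ, n ≤ k * p → Nat.log p n < 3 := by
    intro n hn
    rcases Nat.eq_zero_or_pos n with h0 | h0
    · simp [h0]
    have : n < p ^ 3 := by
      calc n ≤ p ^ 2 := hn.trans hkp2
        _ < p ^ 3 := Nat.pow_lt_pow_right hp1 (by norm_num)
    exact Nat.lt_of_lt_of_le (Nat.log_lt_of_lt_pow h0.ne' this) le_rfl
  have hmem : k * p ∈ {m : ℕ | p ^ k ∣ Nat.factorial m} := by
    rw [Set.mem_setOf_eq, Nat.Prime.pow_dvd_factorial_iff hp (hlog _ le_rfl)]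
    have h1 : k * p / p = k := Nat.mul_div_cancel k hp.pos
    have : k ≤ k * p / p ^ 1 + k * p / p ^ 2 := by simp [h1]
    calc k ≤ k * p / p ^ 1 + k * p / p ^ 2 := this
      _ = ∑ i ∈ Finset.Ico 1 3, k * p / p ^ i := by
          rw [show Finset.Ico 1 3 = {1, 2} by rfl]; simp
  have hnot : ∀ m, m < k * p → m ∉ {m : ℕ | p ^ k ∣ Nat.factorial m} := by
    intro m hm
    rw [Set.mem_setOf_eq, Nat.Prime.pow_dvd_factorial_iff hp (hlog _ hm.le)]
    push_neg
    have h1 : m / p < k := Nat.div_lt_of_lt_mul (by rwa [mul_comm] at hm)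
    have h2 : m / p ^ 2 = 0 := Nat.div_eq_of_lt (lt_of_lt_of_le hm hkp2)
    calc ∑ i ∈ Finset.Ico 1 3, m / p ^ i = m / p ^ 1 + m / p ^ 2 := by
          rw [show Finset.Ico 1 3 = {1, 2} by rfl]; simp
      _ < k := by simp only [pow_one, h2, add_zero]; exact h1
  unfold smarandache
  refine le_antisymm (Nat.sInf_le hmem) ?_
  by_contra h
  push_neg at h
  exact hnot _ h (Nat.sInf_mem ⟨_, hmem⟩)
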